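/- Fix x, x̃ ∈ E. On a probability space, let ℓ be a random index uniformly distributed on {1,…,N}; for each j let a_j and c_j be ℝ^{m_j}-valued square-integrable random vectors, and for each i let b_i and d_i be E-valued square-integrable random vectors, all with mean zero, such that ℓ and all the a_j, b_i, c_j, d_i are mutually independent. Define the random vector e = ( ∇f_ℓ(x + c|_{𝒩_ℓ}) − ∇f_ℓ(x) ) + d_ℓ − ( ∇f_ℓ(x̃ + a|_{𝒩_ℓ}) − ∇f_ℓ(x̃) ) − b_ℓ + (1/N)·∑_{i=1}^N ( ∇f_i(x̃ + a|_{𝒩_i}) − ∇f_i(x̃) ) + (1/N)·∑_{i=1}^N b_i. Then E‖e‖² ≤ 2·L̄²·E[ ∑_{j ∈ 𝒩_ℓ} ‖c_j‖² ] + 2·L̄²·E[ ∑_{j ∈ 𝒩_ℓ} ‖a_j‖² ] + E‖d_ℓ‖² + 2·E‖b_ℓ‖² + (2/N²)·∑_{i=1}^N E‖b_i‖², where the expectations are over both ℓ and the error random vectors. -/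

import Mathlib

open MeasureTheory ProbabilityTheory

/-- The global state space `E = ℝ^{m 0} × ⋯ × ℝ^{m (N-1)}` of the `N`-node network,
realized as a Euclidean space over the sigma type of block coordinates. -/
abbrev GlobalState (N : ℕ) (m : Fin N → ℕ) : Type :=
  EuclideanSpace ℝ ((j : Fin N) × Fin (m j))

/-- `addOn x u S` is `x + u|_S`: the global state obtained from `x` by adding the
block `u j` to the `j`-th block of `x` for each `j ∈ S`, leaving other blocks
unchanged. -/
noncomputable def addOn {N : ℕ} {m : Fin N → ℕ} (x : GlobalState N m)
    (u : ∀ j : Fin N, EuclideanSpace ℝ (Fin (m j))) (S : Finset (Fin N)) :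
    GlobalState N m :=
  WithLp.toLp 2 (fun p => if p.1 ∈ S then x p + u p.1 p.2 else x p)

/-- Index type for the joint family of random objects: the random node index `sel`,
and the quantization-error vectors `a j`, `b i`, `c j`, `d i`. -/
inductive QErrIdx (N : ℕ) where
  | sel : QErrIdx N
  | qa : Fin N → QErrIdx N
  | qb : Fin N → QErrIdx N
  | qc : Fin N → QErrIdx N
  | qd : Fin N → QErrIdx N

/-- Value type of each random object in the family. -/
def QErrIdx.type (N : ℕ) (m : Fin N → ℕ) : QErrIdx N → Type
  | .sel => Fin N
  | .qa j => EuclideanSpace ℝ (Fin (m j))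
  | .qb _ => GlobalState N m
  | .qc j => EuclideanSpace ℝ (Fin (m j))
  | .qd _ => GlobalState N m

noncomputable instance (N : ℕ) (m : Fin N → ℕ) :
    ∀ i : QErrIdx N, MeasurableSpace (QErrIdx.type N m i)
  | .sel => inferInstanceAs (MeasurableSpace (Fin N))
  | .qa j => inferInstanceAs (MeasurableSpace (EuclideanSpace ℝ (Fin (m j))))
  | .qb _ => inferInstanceAs (MeasurableSpace (GlobalState N m))
  | .qc j => inferInstanceAs (MeasurableSpace (EuclideanSpace ℝ (Fin (m j))))
  | .qd _ => inferInstanceAs (MeasurableSpace (GlobalState N m))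

/-- The joint family of random objects: the random node index `ℓ` together with all
the quantization-error random vectors `a j`, `b i`, `c j`, `d i`. -/
def QErrIdx.rv {Ω : Type*} {N : ℕ} {m : Fin N → ℕ}
    (ℓ : Ω → Fin N)
    (a c : Ω → ∀ j : Fin N, EuclideanSpace ℝ (Fin (m j)))
    (b d : Ω → Fin N → GlobalState N m) :
    ∀ i : QErrIdx N, Ω → QErrIdx.type N m i
  | .sel => ℓ
  | .qa j => fun ω => a ω j
  | .qb i => fun ω => b ω i
  | .qc j => fun ω => c ω j
  | .qd i => fun ω => d ω i


section AuxLemmas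

open scoped RealInnerProductSpace

variable {Ω : Type*} [MeasurableSpace Ω] {P : Measure Ω}


lemma aux_sum_norm_sub_avg_le {H : Type*} [NormedAddCommGroup H] [InnerProductSpace ℝ H]
    {N : ℕ} (hN : 0 < N) (v : Fin N → H) :
    ∑ i : Fin N, ‖(1 / N : ℝ) • (∑ k : Fin N, v k) - v i‖ ^ 2 ≤ ∑ i : Fin N, ‖v i‖ ^ 2 := by
  set t : H := (1 / N : ℝ) • (∑ k : Fin N, v k) with ht
  have hNne : (N : ℝ) ≠ 0 := Nat.cast_ne_zero.2 hN.ne'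
  have hsum : (∑ k : Fin N, v k) = (N : ℝ) • t := by
    rw [ht, smul_smul]
    field_simp
    rw [one_smul]
  have hexp : ∀ i, ‖t - v i‖ ^ 2 = ‖t‖ ^ 2 - 2 * ⟪t, v i⟫ + ‖v i‖ ^ 2 := fun i =>
    norm_sub_sq_real t (v i)
  have hsum2 : ∑ i : Fin N, ⟪t, v i⟫ = (N : ℝ) * ‖t‖ ^ 2 := by
    rw [← inner_sum, hsum, real_inner_smul_right, real_inner_self_eq_norm_sq]
  calc ∑ i : Fin N, ‖t - v i‖ ^ 2
      = ∑ i : Fin N, (‖t‖ ^ 2 - 2 * ⟪t, v i⟫ + ‖v i‖ ^ 2) := by simp_rw [hexp]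
    _ = (N : ℝ) * ‖t‖ ^ 2 - 2 * ((N:ℝ) * ‖t‖^2) + ∑ i : Fin N, ‖v i‖ ^ 2 := by
        rw [Finset.sum_add_distrib, Finset.sum_sub_distrib, ← Finset.mul_sum, hsum2]
        simp [Finset.card_univ, mul_comm]
    _ ≤ ∑ i : Fin N, ‖v i‖ ^ 2 := by nlinarith [sq_nonneg ‖t‖, (Nat.cast_pos (α := ℝ)).mpr hN]

lemma aux_integrable_inner {H : Type*} [NormedAddCommGroup H] [InnerProductSpace ℝ H]
    {X Y : Ω → H} (hX : MemLp X 2 P) (hY : MemLp Y 2 P) :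
    Integrable (fun ω => ⟪X ω, Y ω⟫) P := by
  have hXi : Integrable (fun ω => ‖X ω‖ ^ 2) P :=
    (memLp_two_iff_integrable_sq_norm hX.1).1 hX
  have hYi : Integrable (fun ω => ‖Y ω‖ ^ 2) P :=
    (memLp_two_iff_integrable_sq_norm hY.1).1 hY
  refine Integrable.mono' ((hXi.add hYi).const_mul (1/2 : ℝ)) (hX.1.inner hY.1) ?_
  filter_upwards with ω
  have h1 := abs_real_inner_le_norm (X ω) (Y ω)
  have h2 : ‖X ω‖ * ‖Y ω‖ ≤ (‖X ω‖^2 + ‖Y ω‖^2)/2 := by nlinarith [sq_nonneg (‖X ω‖ - ‖Y ω‖)]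
  simpa [Real.norm_eq_abs] using h1.trans (by linarith)

lemma aux_integral_inner_zero {ι : Type*} [Fintype ι] [IsProbabilityMeasure P]
    {X Y : Ω → EuclideanSpace ℝ ι}
    (hind : IndepFun X Y P) (hX : MemLp X 2 P) (hY : MemLp Y 2 P)
    (hY0 : ∫ ω, Y ω ∂P = 0) :
    ∫ ω, ⟪X ω, Y ω⟫ ∂P = 0 := by
  have hXp : ∀ p : ι, MemLp (fun ω => X ω p) 2 P := fun p => by
    have := (EuclideanSpace.proj p (𝕜 := ℝ)).comp_memLp' hX
    exact this
  have hYp : ∀ p : ι, MemLp (fun ω => Y ω p) 2 P := fun p => by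
    have := (EuclideanSpace.proj p (𝕜 := ℝ)).comp_memLp' hY
    exact this
  have hinner : ∀ ω, ⟪X ω, Y ω⟫ = ∑ p : ι, X ω p * Y ω p := by
    intro ω
    simp [PiLp.inner_apply, RCLike.inner_apply, mul_comm]
  rw [integral_congr_ae (Filter.Eventually.of_forall hinner)]
  rw [integral_finset_sum]
  · refine Finset.sum_eq_zero fun p _ => ?_
    have hip : IndepFun (fun ω => X ω p) (fun ω => Y ω p) P := by
      exact hind.comp (EuclideanSpace.proj p (𝕜 := ℝ)).measurable (EuclideanSpace.proj p (𝕜 := ℝ)).measurable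
    have := hip.integral_mul_eq_mul_integral (hXp p).1 (hYp p).1
    have hY0p : ∫ ω, Y ω p ∂P = 0 := by
      have := (EuclideanSpace.proj p (𝕜 := ℝ)).integral_comp_comm (hY.integrable one_le_two)
      simpa [hY0] using this
    simpa [Pi.mul_apply, hY0p] using this
  · intro p _
    have := aux_integrable_inner (H := ℝ) (hXp p) (hYp p)
    simpa [RCLike.inner_apply, mul_comm] using this

lemma aux_expand3 {H : Type*} [NormedAddCommGroup H] [InnerProductSpace ℝ H]
    [IsProbabilityMeasure P] {X Y Z : Ω → H}
    (hX : MemLp X 2 P) (hY : MemLp Y 2 P) (hZ : MemLp Z 2 P)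
    (hXY : ∫ ω, ⟪X ω, Y ω⟫ ∂P = 0) (hXZ : ∫ ω, ⟪X ω, Z ω⟫ ∂P = 0)
    (hYZ : ∫ ω, ⟪Y ω, Z ω⟫ ∂P = 0) :
    ∫ ω, ‖X ω + Y ω + Z ω‖ ^ 2 ∂P
      = ∫ ω, ‖X ω‖ ^ 2 ∂P + ∫ ω, ‖Y ω‖ ^ 2 ∂P + ∫ ω, ‖Z ω‖ ^ 2 ∂P := by
  have hpt : ∀ ω, ‖X ω + Y ω + Z ω‖ ^ 2
      = ‖X ω‖^2 + ‖Y ω‖^2 + ‖Z ω‖^2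
        + (2 * ⟪X ω, Y ω⟫ + 2 * ⟪X ω, Z ω⟫ + 2 * ⟪Y ω, Z ω⟫) := by
    intro ω
    rw [norm_add_sq_real (X ω + Y ω) (Z ω), norm_add_sq_real (X ω) (Y ω), inner_add_left]
    ring
  rw [integral_congr_ae (Filter.Eventually.of_forall hpt)]
  have iX := (memLp_two_iff_integrable_sq_norm hX.1).1 hX
  have iY := (memLp_two_iff_integrable_sq_norm hY.1).1 hY
  have iZ := (memLp_two_iff_integrable_sq_norm hZ.1).1 hZ
  have iXY := aux_integrable_inner hX hY
  have iXZ := aux_integrable_inner hX hZ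
  have iYZ := aux_integrable_inner hY hZ
  have i1 : Integrable (fun ω => ‖X ω‖ ^ 2 + ‖Y ω‖ ^ 2) P := iX.add iY
  have i2 : Integrable (fun ω => ‖X ω‖ ^ 2 + ‖Y ω‖ ^ 2 + ‖Z ω‖ ^ 2) P := i1.add iZ
  have i3 : Integrable (fun ω => 2 * ⟪X ω, Y ω⟫) P := iXY.const_mul 2
  have i4 : Integrable (fun ω => 2 * ⟪X ω, Z ω⟫) P := iXZ.const_mul 2
  have i5 : Integrable (fun ω => 2 * ⟪Y ω, Z ω⟫) P := iYZ.const_mul 2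
  have i6 : Integrable (fun ω => 2 * ⟪X ω, Y ω⟫ + 2 * ⟪X ω, Z ω⟫) P := i3.add i4
  have i7 : Integrable (fun ω => 2 * ⟪X ω, Y ω⟫ + 2 * ⟪X ω, Z ω⟫ + 2 * ⟪Y ω, Z ω⟫) P := i6.add i5
  rw [integral_add i2 i7, integral_add i1 iZ, integral_add iX iY, integral_add i6 i5,
    integral_add i3 i4]
  simp only [integral_const_mul, hXY, hXZ, hYZ]
  ring

lemma aux_decond {N : ℕ} [IsProbabilityMeasure P] {ℓ : Ω → Fin N} (hm : Measurable ℓ)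
    (hu : ∀ k : Fin N, P {ω | ℓ ω = k} = (N : ENNReal)⁻¹)
    (F : Fin N → Ω → ℝ) (hFi : ∀ i, Integrable (F i) P)
    (hFind : ∀ i, IndepFun ℓ (F i) P) :
    ∫ ω, F (ℓ ω) ω ∂P = (N : ℝ)⁻¹ * ∑ i : Fin N, ∫ ω, F i ω ∂P := by
  have hpt : ∀ ω, F (ℓ ω) ω = ∑ i : Fin N, (ℓ ⁻¹' {i}).indicator (F i) ω := by
    intro ω
    rw [Finset.sum_eq_single (ℓ ω)
      (fun i _ hi => Set.indicator_of_notMem (by simp [Ne.symm hi]) _) (by simp)]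
    rw [Set.indicator_of_mem (by simp : ω ∈ ℓ ⁻¹' {ℓ ω})]
  rw [integral_congr_ae (Filter.Eventually.of_forall hpt), integral_finset_sum _
    (fun i _ => (hFi i).indicator (hm (measurableSet_singleton i))), Finset.mul_sum]
  refine Finset.sum_congr rfl fun i _ => ?_
  have hprod : ∀ ω, (ℓ ⁻¹' {i}).indicator (F i) ω
      = ((fun k => if k = i then (1:ℝ) else 0) ∘ ℓ) ω * F i ω := by
    intro ω
    by_cases h : ℓ ω = i <;> simp [Set.indicator_apply, Set.mem_preimage, h]
  rw [integral_congr_ae (Filter.Eventually.of_forall hprod)]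
  have hip : IndepFun ((fun k => if k = i then (1:ℝ) else 0) ∘ ℓ) (F i) P :=
    (hFind i).comp (measurable_of_countable _) measurable_id
  have := hip.integral_mul_eq_mul_integral ((measurable_of_countable _).comp hm).aestronglyMeasurable
    (hFi i).aestronglyMeasurable
  have hre : ∫ ω, ((fun k => if k = i then (1:ℝ) else 0) ∘ ℓ) ω ∂P = (N : ℝ)⁻¹ := by
    have : ((fun k => if k = i then (1:ℝ) else 0) ∘ ℓ) = (ℓ ⁻¹' {i}).indicator (fun _ => (1:ℝ)) := by
      funext ω; by_cases h : ℓ ω = i <;> simp [Set.indicator_apply, h]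
    rw [this, integral_indicator_const (1:ℝ) (hm (measurableSet_singleton i))]
    have : ℓ ⁻¹' {i} = {ω | ℓ ω = i} := rfl
    rw [this, measureReal_def, hu i]
    simp [ENNReal.toReal_inv]
  calc ∫ ω, ((fun k => if k = i then (1:ℝ) else 0) ∘ ℓ) ω * F i ω ∂P
      = ∫ ω, (((fun k => if k = i then (1:ℝ) else 0) ∘ ℓ) * F i) ω ∂P := rfl
    _ = (∫ ω, ((fun k => if k = i then (1:ℝ) else 0) ∘ ℓ) ω ∂P) * ∫ ω, F i ω ∂P := this
    _ = (N : ℝ)⁻¹ * ∫ ω, F i ω ∂P := by rw [hre]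

lemma aux_iIndepFun_ae_eq {ι : Type*} {β : ι → Type*} {m : ∀ i, MeasurableSpace (β i)}
    {f g : ∀ i, Ω → β i} (h : ProbabilityTheory.iIndepFun (m := m) f P)
    (hfg : ∀ i, f i =ᵐ[P] g i) : ProbabilityTheory.iIndepFun (m := m) g P := by
  rw [ProbabilityTheory.iIndepFun_iff_measure_inter_preimage_eq_mul] at h ⊢
  intro S sets hsets
  have hae : ∀ᵐ ω ∂P, ∀ i ∈ S, f i ω = g i ω :=
    (ae_ball_iff S.countable_toSet).2 fun i _ => hfg i
  have h1 : (⋂ i ∈ S, f i ⁻¹' sets i) =ᵐ[P] (⋂ i ∈ S, g i ⁻¹' sets i) := by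
    filter_upwards [hae] with ω hω
    show (ω ∈ ⋂ i ∈ S, f i ⁻¹' sets i) = (ω ∈ ⋂ i ∈ S, g i ⁻¹' sets i)
    rw [eq_iff_iff]
    simp only [Set.mem_iInter, Set.mem_preimage]
    exact forall₂_congr fun i hi => by rw [hω i hi]
  have h2 : ∀ i ∈ S, P (f i ⁻¹' sets i) = P (g i ⁻¹' sets i) := by
    intro i hi
    refine measure_congr ?_
    filter_upwards [hfg i] with ω hω
    show (ω ∈ f i ⁻¹' sets i) = (ω ∈ g i ⁻¹' sets i)
    rw [eq_iff_iff]
    simp only [Set.mem_preimage, hω]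
  rw [← measure_congr h1, h S hsets]
  exact Finset.prod_congr rfl h2

lemma aux_norm_addOn_sub_sq {N : ℕ} {m : Fin N → ℕ} (x : GlobalState N m)
    (u : ∀ j : Fin N, EuclideanSpace ℝ (Fin (m j))) (S : Finset (Fin N)) :
    ‖addOn x u S - x‖ ^ 2 = ∑ j ∈ S, ‖u j‖ ^ 2 := by
  have hdiff : ∀ p : (j : Fin N) × Fin (m j),
      (addOn x u S - x) p = if p.1 ∈ S then u p.1 p.2 else 0 := by
    intro p
    show addOn x u S p - x p = _
    by_cases h : p.1 ∈ S <;> simp [addOn, h]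
  have hnorm : ∀ (ι : Type) (_ : Fintype ι) (v : EuclideanSpace ℝ ι),
      ‖v‖ ^ 2 = ∑ p, ‖v p‖ ^ 2 := by
    intro ι _ v
    rw [EuclideanSpace.norm_eq, Real.sq_sqrt]
    exact Finset.sum_nonneg fun p _ => by positivity
  rw [hnorm _ _ _]
  have : ∑ p : (j : Fin N) × Fin (m j), ‖(addOn x u S - x) p‖ ^ 2
      = ∑ j : Fin N, ∑ k : Fin (m j), ‖(addOn x u S - x) ⟨j, k⟩‖ ^ 2 := by
    rw [← Finset.univ_sigma_univ, Finset.sum_sigma]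
  rw [this]
  have hin : ∀ j : Fin N, ∑ k : Fin (m j), ‖(addOn x u S - x) ⟨j, k⟩‖ ^ 2
      = if j ∈ S then ‖u j‖ ^ 2 else 0 := by
    intro j
    by_cases h : j ∈ S
    · simp only [h, if_true]
      rw [hnorm _ _ (u j)]
      exact Finset.sum_congr rfl fun k _ => by rw [hdiff ⟨j, k⟩]; simp [h]
    · simp only [h, if_false]
      refine Finset.sum_eq_zero fun k _ => by rw [hdiff ⟨j, k⟩]; simp [h]
  simp_rw [hin]
  simp [Finset.sum_ite_mem]

def QErrIdx.equivSum (N : ℕ) : QErrIdx N ≃ (Unit ⊕ Fin N ⊕ Fin N ⊕ Fin N ⊕ Fin N) where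
  toFun x := match x with
    | .sel => Sum.inl ()
    | .qa j => Sum.inr (Sum.inl j)
    | .qb i => Sum.inr (Sum.inr (Sum.inl i))
    | .qc j => Sum.inr (Sum.inr (Sum.inr (Sum.inl j)))
    | .qd i => Sum.inr (Sum.inr (Sum.inr (Sum.inr i)))
  invFun x := match x with
    | Sum.inl _ => .sel
    | Sum.inr (Sum.inl j) => .qa j
    | Sum.inr (Sum.inr (Sum.inl i)) => .qb i
    | Sum.inr (Sum.inr (Sum.inr (Sum.inl j))) => .qc j
    | Sum.inr (Sum.inr (Sum.inr (Sum.inr i))) => .qd i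
  left_inv x := by cases x <;> rfl
  right_inv x := by
    rcases x with _ | x
    · rfl
    rcases x with x | x
    · rfl
    rcases x with x | x
    · rfl
    rcases x with x | x <;> rfl

instance (N : ℕ) : DecidableEq (QErrIdx N) := (QErrIdx.equivSum N).decidableEq

end AuxLemmas


section AuxDefs

variable {N : ℕ} {m : Fin N → ℕ}

/-- Family of block vectors. -/
abbrev AFam (N : ℕ) (m : Fin N → ℕ) := ∀ j : Fin N, EuclideanSpace ℝ (Fin (m j))

/-- Family of global-state vectors. -/
abbrev BFam (N : ℕ) (m : Fin N → ℕ) := Fin N → GlobalState N m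

lemma continuous_addOnMap (x : GlobalState N m) (S : Finset (Fin N)) :
    Continuous fun u : AFam N m => addOn x u S := by
  have h : ∀ p : (j : Fin N) × Fin (m j),
      Continuous fun u : AFam N m => addOn x u S p := by
    intro p
    by_cases hp : p.1 ∈ S
    · simp only [addOn, hp, if_true]
      have h1 : Continuous fun u : AFam N m => u p.1 := continuous_apply p.1
      have h2 : Continuous fun v : EuclideanSpace ℝ (Fin (m p.1)) => v p.2 :=
        (EuclideanSpace.proj p.2 (𝕜 := ℝ)).continuous
      exact continuous_const.add (h2.comp h1)
    · simp only [addOn, hp, if_false]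
      exact continuous_const
  exact (PiLp.continuous_toLp 2 _).comp (continuous_pi h)

noncomputable def auxC (𝒩 : Fin N → Finset (Fin N))
    (g : Fin N → GlobalState N m → GlobalState N m) (x : GlobalState N m)
    (i : Fin N) (u : AFam N m) : GlobalState N m :=
  g i (addOn x u (𝒩 i)) - g i x

noncomputable def auxW (𝒩 : Fin N → Finset (Fin N))
    (g : Fin N → GlobalState N m → GlobalState N m) (xt : GlobalState N m)
    (i : Fin N) (u : AFam N m) : GlobalState N m :=
  (1 / N : ℝ) • (∑ k : Fin N, auxC 𝒩 g xt k u) - auxC 𝒩 g xt i u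

noncomputable def auxS (𝒩 : Fin N → Finset (Fin N))
    (g : Fin N → GlobalState N m → GlobalState N m) (x xt : GlobalState N m)
    (i : Fin N) (q : AFam N m × AFam N m) : GlobalState N m :=
  auxC 𝒩 g x i q.2 + auxW 𝒩 g xt i q.1

noncomputable def auxV (i : Fin N) (w : BFam N m) : GlobalState N m :=
  (1 / N : ℝ) • (∑ k : Fin N, w k) - w i

noncomputable def auxE (𝒩 : Fin N → Finset (Fin N))
    (g : Fin N → GlobalState N m → GlobalState N m) (x xt : GlobalState N m)
    (i : Fin N) (q : AFam N m × BFam N m × AFam N m × BFam N m) : GlobalState N m :=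
  auxS 𝒩 g x xt i (q.1, q.2.2.1) + q.2.2.2 i + auxV i q.2.1

variable {𝒩 : Fin N → Finset (Fin N)} {g : Fin N → GlobalState N m → GlobalState N m}
  {x xt : GlobalState N m}

lemma continuous_auxC (hg : ∀ k, Continuous (g k)) (i : Fin N) : Continuous (auxC 𝒩 g x i) :=
  ((hg i).comp (continuous_addOnMap x (𝒩 i))).sub continuous_const

lemma continuous_auxW (hg : ∀ k, Continuous (g k)) (i : Fin N) : Continuous (auxW 𝒩 g xt i) :=
  by unfold auxW; exact ((continuous_finset_sum _ fun k _ => continuous_auxC hg k).const_smul (1 / N : ℝ)).sub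
      (continuous_auxC hg i)

lemma continuous_auxS (hg : ∀ k, Continuous (g k)) (i : Fin N) : Continuous (auxS 𝒩 g x xt i) :=
  ((continuous_auxC hg i).comp continuous_snd).add
    ((continuous_auxW hg i).comp continuous_fst)

lemma continuous_auxV (i : Fin N) : Continuous (auxV (m := m) i) :=
  by unfold auxV; exact ((continuous_finset_sum _ fun k _ => continuous_apply k).const_smul (1 / N : ℝ)).sub
      (continuous_apply i)

lemma continuous_auxE (hg : ∀ k, Continuous (g k)) (i : Fin N) : Continuous (auxE 𝒩 g x xt i) := by
  refine Continuous.add (Continuous.add ?_ ?_) ?_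
  · exact (continuous_auxS hg i).comp (continuous_fst.prodMk
      (continuous_fst.comp (continuous_snd.comp continuous_snd)))
  · exact (continuous_apply i).comp (continuous_snd.comp (continuous_snd.comp continuous_snd))
  · exact (continuous_auxV i).comp (continuous_fst.comp continuous_snd)

end AuxDefs

set_option maxHeartbeats 2000000 in
/-- Second-moment bound on the gradient error `e` induced by
quantization in the distributed semi-stochastic proximal gradient algorithm:
`E‖e‖² ≤ 2 L̄² E[∑_{j∈𝒩_ℓ} ‖c_j‖²] + 2 L̄² E[∑_{j∈𝒩_ℓ} ‖a_j‖²] + E‖d_ℓ‖² + 2 E‖b_ℓ‖²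
+ (2/N²) ∑_i E‖b_i‖²`. -/
theorem quantization_gradient_error_second_moment
    {Ω : Type*} [MeasurableSpace Ω] (P : Measure Ω) [IsProbabilityMeasure P]
    (N : ℕ) (hN : 0 < N) (m : Fin N → ℕ)
    (𝒩 : Fin N → Finset (Fin N))
    (f : Fin N → GlobalState N m → ℝ)
    (g : Fin N → GlobalState N m → GlobalState N m)
    (hgrad : ∀ i x, HasGradientAt (f i) (g i x) x)
    (Lc : Fin N → NNReal) (hLip : ∀ i, LipschitzWith (Lc i) (g i))
    (Lbar : ℝ) (hLbar : ∀ i, (Lc i : ℝ) ≤ Lbar)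
    (hlocal : ∀ i, ∀ x y : GlobalState N m,
      (∀ p : (j : Fin N) × Fin (m j), p.1 ∈ 𝒩 i → x p = y p) → f i x = f i y)
    (x xt : GlobalState N m)
    (ℓ : Ω → Fin N) (hℓmeas : Measurable ℓ)
    (hℓunif : ∀ k : Fin N, P {ω | ℓ ω = k} = (N : ENNReal)⁻¹)
    (a c : Ω → ∀ j : Fin N, EuclideanSpace ℝ (Fin (m j)))
    (b d : Ω → Fin N → GlobalState N m)
    (ha2 : ∀ j, MemLp (fun ω => a ω j) 2 P)
    (hb2 : ∀ i, MemLp (fun ω => b ω i) 2 P)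
    (hc2 : ∀ j, MemLp (fun ω => c ω j) 2 P)
    (hd2 : ∀ i, MemLp (fun ω => d ω i) 2 P)
    (ha0 : ∀ j, ∫ ω, a ω j ∂P = 0)
    (hb0 : ∀ i, ∫ ω, b ω i ∂P = 0)
    (hc0 : ∀ j, ∫ ω, c ω j ∂P = 0)
    (hd0 : ∀ i, ∫ ω, d ω i ∂P = 0)
    (hindep : iIndepFun (QErrIdx.rv ℓ a c b d) P)
    (e : Ω → GlobalState N m)
    (he : ∀ ω, e ω =
      (g (ℓ ω) (addOn x (c ω) (𝒩 (ℓ ω))) - g (ℓ ω) x) + d ω (ℓ ω)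
        - (g (ℓ ω) (addOn xt (a ω) (𝒩 (ℓ ω))) - g (ℓ ω) xt) - b ω (ℓ ω)
        + (1 / N : ℝ) • ∑ i : Fin N, (g i (addOn xt (a ω) (𝒩 i)) - g i xt)
        + (1 / N : ℝ) • ∑ i : Fin N, b ω i) :
    ∫ ω, ‖e ω‖ ^ 2 ∂P ≤
      2 * Lbar ^ 2 * ∫ ω, (∑ j ∈ 𝒩 (ℓ ω), ‖c ω j‖ ^ 2) ∂P
        + 2 * Lbar ^ 2 * ∫ ω, (∑ j ∈ 𝒩 (ℓ ω), ‖a ω j‖ ^ 2) ∂P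
        + ∫ ω, ‖d ω (ℓ ω)‖ ^ 2 ∂P + 2 * ∫ ω, ‖b ω (ℓ ω)‖ ^ 2 ∂P
        + (2 / (N : ℝ) ^ 2) * ∑ i : Fin N, ∫ ω, ‖b ω i‖ ^ 2 ∂P := by
  classical
  -- measurable modifications of the error vectors
  obtain ⟨a2, a2meas, a2ae⟩ : ∃ a2 : ∀ j : Fin N, Ω → EuclideanSpace ℝ (Fin (m j)),
      (∀ j, Measurable (a2 j)) ∧ ∀ j, (fun ω => a ω j) =ᵐ[P] a2 j :=
    ⟨fun j => (ha2 j).1.mk _, fun j => (ha2 j).1.stronglyMeasurable_mk.measurable,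
      fun j => (ha2 j).1.ae_eq_mk⟩
  obtain ⟨b2, b2meas, b2ae⟩ : ∃ b2 : Fin N → Ω → GlobalState N m,
      (∀ i, Measurable (b2 i)) ∧ ∀ i, (fun ω => b ω i) =ᵐ[P] b2 i :=
    ⟨fun i => (hb2 i).1.mk _, fun i => (hb2 i).1.stronglyMeasurable_mk.measurable,
      fun i => (hb2 i).1.ae_eq_mk⟩
  obtain ⟨c2, c2meas, c2ae⟩ : ∃ c2 : ∀ j : Fin N, Ω → EuclideanSpace ℝ (Fin (m j)),
      (∀ j, Measurable (c2 j)) ∧ ∀ j, (fun ω => c ω j) =ᵐ[P] c2 j :=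
    ⟨fun j => (hc2 j).1.mk _, fun j => (hc2 j).1.stronglyMeasurable_mk.measurable,
      fun j => (hc2 j).1.ae_eq_mk⟩
  obtain ⟨d2, d2meas, d2ae⟩ : ∃ d2 : Fin N → Ω → GlobalState N m,
      (∀ i, Measurable (d2 i)) ∧ ∀ i, (fun ω => d ω i) =ᵐ[P] d2 i :=
    ⟨fun i => (hd2 i).1.mk _, fun i => (hd2 i).1.stronglyMeasurable_mk.measurable,
      fun i => (hd2 i).1.ae_eq_mk⟩
  set a' : Ω → AFam N m := fun ω j => a2 j ω with ha'
  set b' : Ω → BFam N m := fun ω i => b2 i ω with hb'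
  set c' : Ω → AFam N m := fun ω j => c2 j ω with hc'
  set d' : Ω → BFam N m := fun ω i => d2 i ω with hd'
  -- primed MemLp and zero means
  have ha2' : ∀ j, MemLp (a2 j) 2 P := fun j => (ha2 j).ae_eq (a2ae j)
  have hb2' : ∀ i, MemLp (b2 i) 2 P := fun i => (hb2 i).ae_eq (b2ae i)
  have hc2' : ∀ j, MemLp (c2 j) 2 P := fun j => (hc2 j).ae_eq (c2ae j)
  have hd2' : ∀ i, MemLp (d2 i) 2 P := fun i => (hd2 i).ae_eq (d2ae i)
  have hb0' : ∀ i, ∫ ω, b2 i ω ∂P = 0 := fun i => by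
    rw [← integral_congr_ae (b2ae i)]; exact hb0 i
  have hd0' : ∀ i, ∫ ω, d2 i ω ∂P = 0 := fun i => by
    rw [← integral_congr_ae (d2ae i)]; exact hd0 i
  -- independence of the measurable modifications
  have hindep' : iIndepFun (QErrIdx.rv ℓ a' c' b' d') P := by
    refine aux_iIndepFun_ae_eq hindep fun i => ?_
    cases i with
    | sel => exact Filter.EventuallyEq.rfl
    | qa j => exact a2ae j
    | qb i => exact b2ae i
    | qc j => exact c2ae j
    | qd i => exact d2ae i
  have hmeas_rv : ∀ i, Measurable (QErrIdx.rv ℓ a' c' b' d' i) := by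
    intro i
    cases i with
    | sel => exact hℓmeas
    | qa j => exact a2meas j
    | qb i => exact b2meas i
    | qc j => exact c2meas j
    | qd i => exact d2meas i
  -- index finsets
  set SA : Finset (QErrIdx N) := Finset.univ.image QErrIdx.qa with hSA
  set SB : Finset (QErrIdx N) := Finset.univ.image QErrIdx.qb with hSB
  set SC : Finset (QErrIdx N) := Finset.univ.image QErrIdx.qc with hSC
  set SD : Finset (QErrIdx N) := Finset.univ.image QErrIdx.qd with hSD
  -- joint vector of all error variables
  set Φ : Ω → AFam N m × BFam N m × AFam N m × BFam N m :=
    fun ω => (a' ω, b' ω, c' ω, d' ω) with hΦ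
  haveI I3 : OpensMeasurableSpace (BFam N m × AFam N m × BFam N m) :=
    @Prod.opensMeasurableSpace (BFam N m) (AFam N m × BFam N m) _ _ _ _ _ _ _
  haveI I4 : OpensMeasurableSpace (AFam N m × BFam N m × AFam N m × BFam N m) :=
    @Prod.opensMeasurableSpace (AFam N m) (BFam N m × AFam N m × BFam N m) _ _ _ _ _ _ _
  have hΦmeas : Measurable Φ := by
    refine Measurable.prodMk ?_ (Measurable.prodMk ?_ (Measurable.prodMk ?_ ?_))
    · exact measurable_pi_lambda _ a2meas
    · exact measurable_pi_lambda _ b2meas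
    · exact measurable_pi_lambda _ c2meas
    · exact measurable_pi_lambda _ d2meas
  -- the selector is independent of the joint error vector
  have hΦℓ : IndepFun ℓ Φ P := by
    have hdisj : Disjoint ({QErrIdx.sel} : Finset (QErrIdx N)) (SA ∪ SB ∪ SC ∪ SD) := by
      simp only [Finset.disjoint_left, Finset.mem_singleton, Finset.mem_union, hSA, hSB, hSC,
        hSD, Finset.mem_image, Finset.mem_univ, true_and]
      rintro x rfl
      rintro (((⟨j, h⟩ | ⟨j, h⟩) | ⟨j, h⟩) | ⟨j, h⟩) <;> cases h
    have h0 := hindep'.indepFun_finset {QErrIdx.sel} (SA ∪ SB ∪ SC ∪ SD) hdisj hmeas_rv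
    have hselmem : QErrIdx.sel ∈ ({QErrIdx.sel} : Finset (QErrIdx N)) := Finset.mem_singleton_self _
    have hqa : ∀ j : Fin N, QErrIdx.qa j ∈ SA ∪ SB ∪ SC ∪ SD := fun j => by
      simp [hSA, Finset.mem_union, Finset.mem_image]
    have hqb : ∀ i : Fin N, QErrIdx.qb i ∈ SA ∪ SB ∪ SC ∪ SD := fun i => by
      simp [hSB, Finset.mem_union, Finset.mem_image]
    have hqc : ∀ j : Fin N, QErrIdx.qc j ∈ SA ∪ SB ∪ SC ∪ SD := fun j => by
      simp [hSC, Finset.mem_union, Finset.mem_image]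
    have hqd : ∀ i : Fin N, QErrIdx.qd i ∈ SA ∪ SB ∪ SC ∪ SD := fun i => by
      simp [hSD, Finset.mem_union, Finset.mem_image]
    have hL : Measurable fun v : ∀ i : ({QErrIdx.sel} : Finset (QErrIdx N)), QErrIdx.type N m i =>
        v ⟨QErrIdx.sel, hselmem⟩ := measurable_pi_apply _
    have hR : Measurable fun v : ∀ i : ((SA ∪ SB ∪ SC ∪ SD) : Finset (QErrIdx N)),
          QErrIdx.type N m i =>
        ((fun j => v ⟨QErrIdx.qa j, hqa j⟩ : AFam N m),
          ((fun i => v ⟨QErrIdx.qb i, hqb i⟩ : BFam N m),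
            ((fun j => v ⟨QErrIdx.qc j, hqc j⟩ : AFam N m),
              (fun i => v ⟨QErrIdx.qd i, hqd i⟩ : BFam N m)))) := by
      refine Measurable.prodMk ?_ (Measurable.prodMk ?_ (Measurable.prodMk ?_ ?_)) <;>
        exact measurable_pi_lambda _ fun _ => measurable_pi_apply _
    exact h0.comp hL hR
  -- pairwise group independences
  set Pac : Ω → AFam N m × AFam N m := fun ω => (a' ω, c' ω) with hPac
  have hACmem : ∀ j : Fin N, QErrIdx.qa j ∈ SA ∪ SC := fun j => by
    simp [hSA, Finset.mem_union, Finset.mem_image]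
  have hCCmem : ∀ j : Fin N, QErrIdx.qc j ∈ SA ∪ SC := fun j => by
    simp [hSC, Finset.mem_union, Finset.mem_image]
  have hACproj : Measurable fun v : ∀ i : ((SA ∪ SC) : Finset (QErrIdx N)), QErrIdx.type N m i =>
      ((fun j => v ⟨QErrIdx.qa j, hACmem j⟩ : AFam N m),
        (fun j => v ⟨QErrIdx.qc j, hCCmem j⟩ : AFam N m)) :=
    Measurable.prodMk (measurable_pi_lambda _ fun _ => measurable_pi_apply _)
      (measurable_pi_lambda _ fun _ => measurable_pi_apply _)
  have hBproj : Measurable fun v : ∀ i : (SB : Finset (QErrIdx N)), QErrIdx.type N m i =>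
      (fun i => v ⟨QErrIdx.qb i, by simp [hSB, Finset.mem_image]⟩ : BFam N m) :=
    measurable_pi_lambda _ fun _ => measurable_pi_apply _
  have hACD : ∀ i : Fin N, IndepFun Pac (fun ω => d' ω i) P := by
    intro i
    have hdisj : Disjoint (SA ∪ SC) ({QErrIdx.qd i} : Finset (QErrIdx N)) := by
      simp only [Finset.disjoint_right, Finset.mem_singleton, Finset.mem_union, hSA, hSC,
        Finset.mem_image, Finset.mem_univ, true_and]
      rintro x rfl
      rintro (⟨j, h⟩ | ⟨j, h⟩) <;> cases h
    have h0 := hindep'.indepFun_finset (SA ∪ SC) {QErrIdx.qd i} hdisj hmeas_rv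
    exact h0.comp hACproj (measurable_pi_apply
      (⟨QErrIdx.qd i, Finset.mem_singleton_self _⟩ :
        (({QErrIdx.qd i} : Finset (QErrIdx N)) : Type)))
  have hACB : IndepFun Pac b' P := by
    have hdisj : Disjoint (SA ∪ SC) SB := by
      simp only [Finset.disjoint_right, Finset.mem_union, hSA, hSB, hSC,
        Finset.mem_image, Finset.mem_univ, true_and]
      rintro x ⟨j, rfl⟩
      rintro (⟨k, h⟩ | ⟨k, h⟩) <;> cases h
    have h0 := hindep'.indepFun_finset (SA ∪ SC) SB hdisj hmeas_rv
    exact h0.comp hACproj hBproj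
  have hDB : ∀ i : Fin N, IndepFun (fun ω => d' ω i) b' P := by
    intro i
    have hdisj : Disjoint ({QErrIdx.qd i} : Finset (QErrIdx N)) SB := by
      simp only [Finset.disjoint_left, Finset.mem_singleton, hSB,
        Finset.mem_image, Finset.mem_univ, true_and]
      rintro x rfl ⟨k, h⟩
      cases h
    have h0 := hindep'.indepFun_finset {QErrIdx.qd i} SB hdisj hmeas_rv
    exact h0.comp (measurable_pi_apply
      (⟨QErrIdx.qd i, Finset.mem_singleton_self _⟩ :
        (({QErrIdx.qd i} : Finset (QErrIdx N)) : Type))) hBproj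
  -- the component processes
  have hgcont : ∀ k, Continuous (g k) := fun k => (hLip k).continuous
  set CC : Fin N → Ω → GlobalState N m := fun i ω => auxC 𝒩 g x i (c' ω) with hCC
  set TT : Fin N → Ω → GlobalState N m := fun i ω => auxC 𝒩 g xt i (a' ω) with hTT
  set WW : Fin N → Ω → GlobalState N m := fun i ω => auxW 𝒩 g xt i (a' ω) with hWW
  set SSf : Fin N → Ω → GlobalState N m := fun i ω => auxS 𝒩 g x xt i (Pac ω) with hSSf
  set VV : Fin N → Ω → GlobalState N m := fun i ω => auxV i (b' ω) with hVV
  set DDf : Fin N → Ω → GlobalState N m := fun i ω => d' ω i with hDDf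
  set EE : Fin N → Ω → GlobalState N m := fun i ω => SSf i ω + DDf i ω + VV i ω with hEE
  set Fc : Fin N → Ω → ℝ := fun i ω => ∑ j ∈ 𝒩 i, ‖c' ω j‖ ^ 2 with hFcdef
  set Fa : Fin N → Ω → ℝ := fun i ω => ∑ j ∈ 𝒩 i, ‖a' ω j‖ ^ 2 with hFadef
  have hLbar0 : 0 ≤ Lbar := le_trans (Lc ⟨0, hN⟩).2 (hLbar ⟨0, hN⟩)
  -- integrability of the quadratic error sums
  have intFc : ∀ i, Integrable (Fc i) P := fun i =>
    integrable_finset_sum _ fun j _ =>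
      (memLp_two_iff_integrable_sq_norm (hc2' j).1).1 (hc2' j)
  have intFa : ∀ i, Integrable (Fa i) P := fun i =>
    integrable_finset_sum _ fun j _ =>
      (memLp_two_iff_integrable_sq_norm (ha2' j).1).1 (ha2' j)
  have intFb : ∀ i, Integrable (fun ω => ‖b2 i ω‖ ^ 2) P := fun i =>
    (memLp_two_iff_integrable_sq_norm (hb2' i).1).1 (hb2' i)
  have intFd : ∀ i, Integrable (fun ω => ‖d2 i ω‖ ^ 2) P := fun i =>
    (memLp_two_iff_integrable_sq_norm (hd2' i).1).1 (hd2' i)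
  -- pointwise Lipschitz bounds
  have hCpt : ∀ i ω, ‖CC i ω‖ ^ 2 ≤ Lbar ^ 2 * Fc i ω := by
    intro i ω
    have h2 := (hLip i).dist_le_mul (addOn x (c' ω) (𝒩 i)) x
    rw [dist_eq_norm, dist_eq_norm] at h2
    have h1 : ‖CC i ω‖ ≤ Lbar * ‖addOn x (c' ω) (𝒩 i) - x‖ :=
      h2.trans (mul_le_mul_of_nonneg_right (hLbar i) (norm_nonneg _))
    have h3 : ‖addOn x (c' ω) (𝒩 i) - x‖ ^ 2 = Fc i ω := aux_norm_addOn_sub_sq x (c' ω) (𝒩 i)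
    calc ‖CC i ω‖ ^ 2 ≤ (Lbar * ‖addOn x (c' ω) (𝒩 i) - x‖) ^ 2 :=
          pow_le_pow_left₀ (norm_nonneg _) h1 2
      _ = Lbar ^ 2 * Fc i ω := by rw [mul_pow, h3]
  have hTpt : ∀ i ω, ‖TT i ω‖ ^ 2 ≤ Lbar ^ 2 * Fa i ω := by
    intro i ω
    have h2 := (hLip i).dist_le_mul (addOn xt (a' ω) (𝒩 i)) xt
    rw [dist_eq_norm, dist_eq_norm] at h2
    have h1 : ‖TT i ω‖ ≤ Lbar * ‖addOn xt (a' ω) (𝒩 i) - xt‖ :=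
      h2.trans (mul_le_mul_of_nonneg_right (hLbar i) (norm_nonneg _))
    have h3 : ‖addOn xt (a' ω) (𝒩 i) - xt‖ ^ 2 = Fa i ω := aux_norm_addOn_sub_sq xt (a' ω) (𝒩 i)
    calc ‖TT i ω‖ ^ 2 ≤ (Lbar * ‖addOn xt (a' ω) (𝒩 i) - xt‖) ^ 2 :=
          pow_le_pow_left₀ (norm_nonneg _) h1 2
      _ = Lbar ^ 2 * Fa i ω := by rw [mul_pow, h3]
  -- measurability of the processes
  have hCmeas : ∀ i, Measurable (CC i) := fun i =>
    (continuous_auxC hgcont i).measurable.comp (measurable_pi_lambda _ c2meas)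
  have hTmeas : ∀ i, Measurable (TT i) := fun i =>
    (continuous_auxC hgcont i).measurable.comp (measurable_pi_lambda _ a2meas)
  have hWmeas : ∀ i, Measurable (WW i) := fun i =>
    (continuous_auxW hgcont i).measurable.comp (measurable_pi_lambda _ a2meas)
  -- MemLp of the processes
  have hCmem : ∀ i, MemLp (CC i) 2 P := by
    intro i
    refine (memLp_two_iff_integrable_sq_norm (hCmeas i).aestronglyMeasurable).2 ?_
    refine Integrable.mono' ((intFc i).const_mul (Lbar ^ 2))
      (((hCmeas i).norm.pow_const 2).aestronglyMeasurable) ?_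
    filter_upwards with ω
    rw [Real.norm_eq_abs, abs_of_nonneg (by positivity)]
    exact hCpt i ω
  have hTmem : ∀ i, MemLp (TT i) 2 P := by
    intro i
    refine (memLp_two_iff_integrable_sq_norm (hTmeas i).aestronglyMeasurable).2 ?_
    refine Integrable.mono' ((intFa i).const_mul (Lbar ^ 2))
      (((hTmeas i).norm.pow_const 2).aestronglyMeasurable) ?_
    filter_upwards with ω
    rw [Real.norm_eq_abs, abs_of_nonneg (by positivity)]
    exact hTpt i ω
  have hWmem : ∀ i, MemLp (WW i) 2 P := by
    intro i
    have hsum : MemLp (fun ω => ∑ k : Fin N, TT k ω) 2 P := by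
      refine (memLp_finset_sum' (μ := P) Finset.univ (f := TT) fun k _ => hTmem k).ae_eq ?_
      exact Filter.Eventually.of_forall fun ω => by simp [Finset.sum_apply]
    exact (hsum.const_smul ((1 : ℝ) / N)).sub (hTmem i)
  have hSmem : ∀ i, MemLp (SSf i) 2 P := fun i => (hCmem i).add (hWmem i)
  have hVmem : ∀ i, MemLp (VV i) 2 P := by
    intro i
    have hsum : MemLp (fun ω => ∑ k : Fin N, b2 k ω) 2 P := by
      refine (memLp_finset_sum' (μ := P) Finset.univ (f := b2) fun k _ => hb2' k).ae_eq ?_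
      exact Filter.Eventually.of_forall fun ω => by simp [Finset.sum_apply]
    exact (hsum.const_smul ((1 : ℝ) / N)).sub (hb2' i)
  have hDmem : ∀ i, MemLp (DDf i) 2 P := fun i => hd2' i
  have hEmem : ∀ i, MemLp (EE i) 2 P := fun i => ((hSmem i).add (hDmem i)).add (hVmem i)
  -- integrabilities of squared norms
  have intC : ∀ i, Integrable (fun ω => ‖CC i ω‖ ^ 2) P := fun i =>
    (memLp_two_iff_integrable_sq_norm (hCmem i).1).1 (hCmem i)
  have intT : ∀ i, Integrable (fun ω => ‖TT i ω‖ ^ 2) P := fun i =>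
    (memLp_two_iff_integrable_sq_norm (hTmem i).1).1 (hTmem i)
  have intW : ∀ i, Integrable (fun ω => ‖WW i ω‖ ^ 2) P := fun i =>
    (memLp_two_iff_integrable_sq_norm (hWmem i).1).1 (hWmem i)
  have intS : ∀ i, Integrable (fun ω => ‖SSf i ω‖ ^ 2) P := fun i =>
    (memLp_two_iff_integrable_sq_norm (hSmem i).1).1 (hSmem i)
  have intV : ∀ i, Integrable (fun ω => ‖VV i ω‖ ^ 2) P := fun i =>
    (memLp_two_iff_integrable_sq_norm (hVmem i).1).1 (hVmem i)
  have intE : ∀ i, Integrable (fun ω => ‖EE i ω‖ ^ 2) P := fun i =>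
    (memLp_two_iff_integrable_sq_norm (hEmem i).1).1 (hEmem i)
  -- zero means
  have hVint0 : ∀ i, ∫ ω, VV i ω ∂P = 0 := by
    intro i
    have h1 : Integrable (fun ω => ∑ k : Fin N, b2 k ω) P :=
      integrable_finset_sum _ fun k _ => (hb2' k).integrable one_le_two
    have h1s : Integrable (fun ω => (1 / N : ℝ) • (∑ k : Fin N, b2 k ω)) P :=
      h1.smul ((1 : ℝ) / N)
    have : ∫ ω, VV i ω ∂P
        = ∫ ω, ((1 / N : ℝ) • (∑ k : Fin N, b2 k ω) - b2 i ω) ∂P := rfl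
    rw [this, integral_sub h1s ((hb2' i).integrable one_le_two),
      integral_smul, integral_finset_sum _ fun k _ => (hb2' k).integrable one_le_two]
    simp [hb0']
  have hDint0 : ∀ i, ∫ ω, DDf i ω ∂P = 0 := fun i => hd0' i
  -- cross-term independences
  have hindSD : ∀ i, IndepFun (SSf i) (DDf i) P := fun i =>
    (hACD i).comp (continuous_auxS hgcont i).measurable measurable_id
  have hindSV : ∀ i, IndepFun (SSf i) (VV i) P := fun i =>
    hACB.comp (continuous_auxS hgcont i).measurable (continuous_auxV i).measurable
  have hindDV : ∀ i, IndepFun (DDf i) (VV i) P := fun i =>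
    (hDB i).comp measurable_id (continuous_auxV i).measurable
  -- orthogonal expansion
  have hexp : ∀ i, ∫ ω, ‖EE i ω‖ ^ 2 ∂P
      = ∫ ω, ‖SSf i ω‖ ^ 2 ∂P + ∫ ω, ‖DDf i ω‖ ^ 2 ∂P + ∫ ω, ‖VV i ω‖ ^ 2 ∂P := by
    intro i
    refine aux_expand3 (hSmem i) (hDmem i) (hVmem i) ?_ ?_ ?_
    · exact aux_integral_inner_zero (hindSD i) (hSmem i) (hDmem i) (hDint0 i)
    · exact aux_integral_inner_zero (hindSV i) (hSmem i) (hVmem i) (hVint0 i)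
    · exact aux_integral_inner_zero (hindDV i) (hDmem i) (hVmem i) (hVint0 i)
  -- independence of the selector from the relevant real statistics
  have hprojA : Continuous fun q : AFam N m × BFam N m × AFam N m × BFam N m => q.1 :=
    continuous_fst
  have hprojB : Continuous fun q : AFam N m × BFam N m × AFam N m × BFam N m => q.2.1 :=
    continuous_fst.comp continuous_snd
  have hprojC : Continuous fun q : AFam N m × BFam N m × AFam N m × BFam N m => q.2.2.1 :=
    continuous_fst.comp (continuous_snd.comp continuous_snd)
  have hprojD : Continuous fun q : AFam N m × BFam N m × AFam N m × BFam N m => q.2.2.2 :=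
    continuous_snd.comp (continuous_snd.comp continuous_snd)
  have hIndFE : ∀ i, IndepFun ℓ (fun ω => ‖EE i ω‖ ^ 2) P := fun i =>
    hΦℓ.comp measurable_id ((continuous_auxE hgcont i).norm.pow 2).measurable
  have hIndFc : ∀ i, IndepFun ℓ (Fc i) P := fun i =>
    hΦℓ.comp measurable_id
      (continuous_finset_sum _ fun j _ =>
        (((continuous_apply j).comp hprojC).norm.pow 2)).measurable
  have hIndFa : ∀ i, IndepFun ℓ (Fa i) P := fun i =>
    hΦℓ.comp measurable_id
      (continuous_finset_sum _ fun j _ =>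
        (((continuous_apply j).comp hprojA).norm.pow 2)).measurable
  have hIndFd : ∀ i, IndepFun ℓ (fun ω => ‖d2 i ω‖ ^ 2) P := fun i =>
    hΦℓ.comp measurable_id (((continuous_apply i).comp hprojD).norm.pow 2).measurable
  have hIndFb : ∀ i, IndepFun ℓ (fun ω => ‖b2 i ω‖ ^ 2) P := fun i =>
    hΦℓ.comp measurable_id (((continuous_apply i).comp hprojB).norm.pow 2).measurable
  -- a.e. identification of the error process
  have haea : ∀ᵐ ω ∂P, ∀ j, a ω j = a' ω j := ae_all_iff.2 fun j => a2ae j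
  have haeb : ∀ᵐ ω ∂P, ∀ i, b ω i = b' ω i := ae_all_iff.2 fun i => b2ae i
  have haec : ∀ᵐ ω ∂P, ∀ j, c ω j = c' ω j := ae_all_iff.2 fun j => c2ae j
  have haed : ∀ᵐ ω ∂P, ∀ i, d ω i = d' ω i := ae_all_iff.2 fun i => d2ae i
  have hLHS : ∫ ω, ‖e ω‖ ^ 2 ∂P = ∫ ω, ‖EE (ℓ ω) ω‖ ^ 2 ∂P := by
    refine integral_congr_ae ?_
    filter_upwards [haea, haeb, haec, haed] with ω hA hB hC hD
    have hA' : a ω = a' ω := funext hA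
    have hB' : b ω = b' ω := funext hB
    have hC' : c ω = c' ω := funext hC
    have hD' : d ω = d' ω := funext hD
    rw [he ω, hA', hB', hC', hD']
    congr 2
    show _ = SSf (ℓ ω) ω + DDf (ℓ ω) ω + VV (ℓ ω) ω
    show _ = (auxC 𝒩 g x (ℓ ω) (c' ω) + auxW 𝒩 g xt (ℓ ω) (a' ω)) + d' ω (ℓ ω)
      + auxV (ℓ ω) (b' ω)
    simp only [auxC, auxW, auxV]
    abel
  have hdecE : ∫ ω, ‖EE (ℓ ω) ω‖ ^ 2 ∂P
      = (N : ℝ)⁻¹ * ∑ i : Fin N, ∫ ω, ‖EE i ω‖ ^ 2 ∂P :=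
    aux_decond hℓmeas hℓunif (fun i ω => ‖EE i ω‖ ^ 2) intE hIndFE
  have hdecc : ∫ ω, (∑ j ∈ 𝒩 (ℓ ω), ‖c ω j‖ ^ 2) ∂P
      = (N : ℝ)⁻¹ * ∑ i : Fin N, ∫ ω, Fc i ω ∂P := by
    have h1 : ∫ ω, (∑ j ∈ 𝒩 (ℓ ω), ‖c ω j‖ ^ 2) ∂P = ∫ ω, Fc (ℓ ω) ω ∂P := by
      refine integral_congr_ae ?_
      filter_upwards [haec] with ω hC
      exact Finset.sum_congr rfl fun j _ => by rw [hC j]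
    rw [h1]
    exact aux_decond hℓmeas hℓunif Fc intFc hIndFc
  have hdeca : ∫ ω, (∑ j ∈ 𝒩 (ℓ ω), ‖a ω j‖ ^ 2) ∂P
      = (N : ℝ)⁻¹ * ∑ i : Fin N, ∫ ω, Fa i ω ∂P := by
    have h1 : ∫ ω, (∑ j ∈ 𝒩 (ℓ ω), ‖a ω j‖ ^ 2) ∂P = ∫ ω, Fa (ℓ ω) ω ∂P := by
      refine integral_congr_ae ?_
      filter_upwards [haea] with ω hA
      exact Finset.sum_congr rfl fun j _ => by rw [hA j]
    rw [h1]
    exact aux_decond hℓmeas hℓunif Fa intFa hIndFa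
  have hdecd : ∫ ω, ‖d ω (ℓ ω)‖ ^ 2 ∂P
      = (N : ℝ)⁻¹ * ∑ i : Fin N, ∫ ω, ‖d2 i ω‖ ^ 2 ∂P := by
    have h1 : ∫ ω, ‖d ω (ℓ ω)‖ ^ 2 ∂P = ∫ ω, ‖d2 (ℓ ω) ω‖ ^ 2 ∂P := by
      refine integral_congr_ae ?_
      filter_upwards [haed] with ω hD
      rw [hD (ℓ ω)]
    rw [h1]
    exact aux_decond hℓmeas hℓunif (fun i ω => ‖d2 i ω‖ ^ 2) intFd hIndFd
  have hdecb : ∫ ω, ‖b ω (ℓ ω)‖ ^ 2 ∂P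
      = (N : ℝ)⁻¹ * ∑ i : Fin N, ∫ ω, ‖b2 i ω‖ ^ 2 ∂P := by
    have h1 : ∫ ω, ‖b ω (ℓ ω)‖ ^ 2 ∂P = ∫ ω, ‖b2 (ℓ ω) ω‖ ^ 2 ∂P := by
      refine integral_congr_ae ?_
      filter_upwards [haeb] with ω hB
      rw [hB (ℓ ω)]
    rw [h1]
    exact aux_decond hℓmeas hℓunif (fun i ω => ‖b2 i ω‖ ^ 2) intFb hIndFb
  have hbeq : ∑ i : Fin N, ∫ ω, ‖b ω i‖ ^ 2 ∂P = ∑ i : Fin N, ∫ ω, ‖b2 i ω‖ ^ 2 ∂P :=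
    Finset.sum_congr rfl fun i _ => integral_congr_ae
      ((b2ae i).mono fun ω h => congrArg (fun v => ‖v‖ ^ 2) h)
  -- per-node inequalities
  have hSle : ∀ i, ∫ ω, ‖SSf i ω‖ ^ 2 ∂P
      ≤ 2 * ∫ ω, ‖CC i ω‖ ^ 2 ∂P + 2 * ∫ ω, ‖WW i ω‖ ^ 2 ∂P := by
    intro i
    have hpt : (fun ω => ‖SSf i ω‖ ^ 2) ≤ fun ω => 2 * ‖CC i ω‖ ^ 2 + 2 * ‖WW i ω‖ ^ 2 := by
      intro ω
      have h1 : SSf i ω = CC i ω + WW i ω := rfl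
      show ‖SSf i ω‖ ^ 2 ≤ 2 * ‖CC i ω‖ ^ 2 + 2 * ‖WW i ω‖ ^ 2
      rw [h1]
      have h2 := norm_add_le (CC i ω) (WW i ω)
      nlinarith [sq_nonneg (‖CC i ω‖ - ‖WW i ω‖), norm_nonneg (CC i ω + WW i ω),
        norm_nonneg (CC i ω), norm_nonneg (WW i ω)]
    have hint2 : Integrable (fun ω => 2 * ‖CC i ω‖ ^ 2 + 2 * ‖WW i ω‖ ^ 2) P :=
      ((intC i).const_mul 2).add ((intW i).const_mul 2)
    have h2 := integral_mono (intS i) hint2 hpt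
    rwa [integral_add ((intC i).const_mul 2) ((intW i).const_mul 2), integral_const_mul,
      integral_const_mul] at h2
  have hCle : ∀ i, ∫ ω, ‖CC i ω‖ ^ 2 ∂P ≤ Lbar ^ 2 * ∫ ω, Fc i ω ∂P := by
    intro i
    have h2 := integral_mono (intC i) ((intFc i).const_mul (Lbar ^ 2)) (hCpt i)
    rwa [integral_const_mul] at h2
  have hTle : ∀ i, ∫ ω, ‖TT i ω‖ ^ 2 ∂P ≤ Lbar ^ 2 * ∫ ω, Fa i ω ∂P := by
    intro i
    have h2 := integral_mono (intT i) ((intFa i).const_mul (Lbar ^ 2)) (hTpt i)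
    rwa [integral_const_mul] at h2
  have hWsum : ∑ i : Fin N, ∫ ω, ‖WW i ω‖ ^ 2 ∂P ≤ ∑ i : Fin N, ∫ ω, ‖TT i ω‖ ^ 2 ∂P := by
    rw [← integral_finset_sum _ fun i _ => intW i, ← integral_finset_sum _ fun i _ => intT i]
    refine integral_mono (integrable_finset_sum _ fun i _ => intW i)
      (integrable_finset_sum _ fun i _ => intT i) fun ω => ?_
    exact aux_sum_norm_sub_avg_le hN fun k => TT k ω
  have hVsum : ∑ i : Fin N, ∫ ω, ‖VV i ω‖ ^ 2 ∂P ≤ ∑ i : Fin N, ∫ ω, ‖b2 i ω‖ ^ 2 ∂P := by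
    rw [← integral_finset_sum _ fun i _ => intV i, ← integral_finset_sum _ fun i _ => intFb i]
    refine integral_mono (integrable_finset_sum _ fun i _ => intV i)
      (integrable_finset_sum _ fun i _ => intFb i) fun ω => ?_
    exact aux_sum_norm_sub_avg_le hN fun k => b2 k ω
  have hDsum : ∑ i : Fin N, ∫ ω, ‖DDf i ω‖ ^ 2 ∂P = ∑ i : Fin N, ∫ ω, ‖d2 i ω‖ ^ 2 ∂P :=
    Finset.sum_congr rfl fun i _ => rfl
  -- assembly
  have hIbpos : 0 ≤ ∑ i : Fin N, ∫ ω, ‖b2 i ω‖ ^ 2 ∂P :=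
    Finset.sum_nonneg fun i _ => integral_nonneg fun ω => by positivity
  have hNinv : (0:ℝ) ≤ (N : ℝ)⁻¹ := by positivity
  have hEsum : ∑ i : Fin N, ∫ ω, ‖EE i ω‖ ^ 2 ∂P
      ≤ 2 * Lbar ^ 2 * (∑ i : Fin N, ∫ ω, Fc i ω ∂P)
        + 2 * Lbar ^ 2 * (∑ i : Fin N, ∫ ω, Fa i ω ∂P)
        + (∑ i : Fin N, ∫ ω, ‖d2 i ω‖ ^ 2 ∂P)
        + (∑ i : Fin N, ∫ ω, ‖b2 i ω‖ ^ 2 ∂P) := by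
    have h1 : ∑ i : Fin N, ∫ ω, ‖EE i ω‖ ^ 2 ∂P
        = ∑ i : Fin N, ∫ ω, ‖SSf i ω‖ ^ 2 ∂P + ∑ i : Fin N, ∫ ω, ‖DDf i ω‖ ^ 2 ∂P
          + ∑ i : Fin N, ∫ ω, ‖VV i ω‖ ^ 2 ∂P := by
      rw [← Finset.sum_add_distrib, ← Finset.sum_add_distrib]
      exact Finset.sum_congr rfl fun i _ => hexp i
    have h2 : ∑ i : Fin N, ∫ ω, ‖SSf i ω‖ ^ 2 ∂P
        ≤ 2 * ∑ i : Fin N, ∫ ω, ‖CC i ω‖ ^ 2 ∂P + 2 * ∑ i : Fin N, ∫ ω, ‖WW i ω‖ ^ 2 ∂P := by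
      rw [Finset.mul_sum, Finset.mul_sum, ← Finset.sum_add_distrib]
      exact Finset.sum_le_sum fun i _ => hSle i
    have h3 : ∑ i : Fin N, ∫ ω, ‖CC i ω‖ ^ 2 ∂P
        ≤ Lbar ^ 2 * ∑ i : Fin N, ∫ ω, Fc i ω ∂P := by
      rw [Finset.mul_sum]
      exact Finset.sum_le_sum fun i _ => hCle i
    have h4 : ∑ i : Fin N, ∫ ω, ‖TT i ω‖ ^ 2 ∂P
        ≤ Lbar ^ 2 * ∑ i : Fin N, ∫ ω, Fa i ω ∂P := by
      rw [Finset.mul_sum]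
      exact Finset.sum_le_sum fun i _ => hTle i
    linarith [hWsum, hVsum, hDsum]
  rw [hLHS, hdecE, hdecc, hdeca, hdecd, hdecb, hbeq]
  have hstep := mul_le_mul_of_nonneg_left hEsum hNinv
  have hfin : (0:ℝ) ≤ (2 / (N : ℝ) ^ 2) * ∑ i : Fin N, ∫ ω, ‖b2 i ω‖ ^ 2 ∂P := by
    have : (0:ℝ) ≤ 2 / (N : ℝ) ^ 2 := by positivity
    exact mul_nonneg this hIbpos
  nlinarith [mul_nonneg hNinv hIbpos]
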